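/- Let H be a Hopf *-algebra with bijective antipode S, B a right coideal *-subalgebra, and B⁺ = B ∩ ker ε. Then S(H B⁺)* = H B⁺, i.e. the left ideal H B⁺ is invariant under the anti-linear map a ↦ S(a)*. -/

import Mathlib

open Coalgebra HopfAlgebra TensorProduct

/-- For a Hopf *-algebra H with right coideal *-subalgebra B, the left ideal
HB⁺ (B⁺ = B ∩ ker ε) is invariant under the involutive algebra homomorphism
θ : a ↦ S(a)*, i.e. S(HB⁺)* = HB⁺. -/
theorem stmt17 {H : Type*} [Ring H] [HopfAlgebra ℂ H] [StarRing H]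
    (B : Subalgebra ℂ H) (hBstar : ∀ b ∈ B, star b ∈ B)
    (hB : ∀ b ∈ B, Coalgebra.comul (R := ℂ) b ∈
      LinearMap.range (TensorProduct.map B.toSubmodule.subtype (LinearMap.id : H →ₗ[ℂ] H)))
    (θ : H → H) (hθ : ∀ a, θ a = star (HopfAlgebra.antipode (R := ℂ) a))
    (hθmul : ∀ a b, θ (a * b) = θ a * θ b) (hθθ : ∀ a, θ (θ a) = a)
    (hθε : ∀ a, Coalgebra.counit (R := ℂ) (θ a) = star (Coalgebra.counit (R := ℂ) a))
    (Bplus : Set H) (hBplus : Bplus = {b | b ∈ B ∧ Coalgebra.counit (R := ℂ) b = 0})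
    (J : Submodule ℂ H)
    (hJ : J = Submodule.span ℂ {x | ∃ a : H, ∃ b ∈ Bplus, x = a * b}) :
    θ '' (J : Set H) = (J : Set H) := by
  have θadd : ∀ x y : H, θ (x + y) = θ x + θ y := by
    intro x y; simp [hθ, map_add, star_add]
  have θzero : θ (0 : H) = 0 := by simp [hθ]
  -- antipode 1 = 1
  have Sone : HopfAlgebra.antipode (R := ℂ) (1 : H) = 1 := by
    have h := mul_antipode_rTensor_comul_apply (R := ℂ) (1 : H)
    simpa [Algebra.TensorProduct.one_def] using h
  -- θ on scalars
  have θalg : ∀ c : ℂ, θ (algebraMap ℂ H c) = star (algebraMap ℂ H c) := by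
    intro c
    rw [hθ]
    congr 1
    rw [Algebra.algebraMap_eq_smul_one, map_smul, Sone]
  have hsmulL : ∀ (c : ℂ) (x : H), θ (c • x) = star (algebraMap ℂ H c) * θ x := by
    intro c x
    rw [Algebra.smul_def, hθmul, θalg]
  have hsmulR : ∀ (c : ℂ) (x : H), θ (c • x) = θ x * star (algebraMap ℂ H c) := by
    intro c x
    rw [Algebra.smul_def, Algebra.commutes, hθmul, θalg]
  -- ε ∘ S = ε
  have εS : ∀ x : H, Coalgebra.counit (R := ℂ) (HopfAlgebra.antipode (R := ℂ) x)
      = Coalgebra.counit (R := ℂ) x := by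
    intro x
    set repr := Coalgebra.Repr.arbitrary ℂ x with hrepr
    have h1 := sum_antipode_mul_eq_algebraMap_counit (R := ℂ) repr
    have h2 := congrArg (Coalgebra.counit (R := ℂ)) h1
    simp only [map_sum, Bialgebra.counit_mul, Bialgebra.counit_algebraMap] at h2
    have h3 := sum_tmul_counit_eq (R := ℂ) repr
    have h4 := congrArg (TensorProduct.rid ℂ H) h3
    simp only [map_sum, TensorProduct.rid_tmul, one_smul] at h4
    calc Coalgebra.counit (R := ℂ) (HopfAlgebra.antipode (R := ℂ) x)
        = Coalgebra.counit (R := ℂ) (HopfAlgebra.antipode (R := ℂ)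
            (∑ i ∈ repr.index, Coalgebra.counit (R := ℂ) (repr.right i) • repr.left i)) := by
          rw [h4]
      _ = ∑ i ∈ repr.index, Coalgebra.counit (R := ℂ)
            (HopfAlgebra.antipode (R := ℂ) (repr.left i)) *
            Coalgebra.counit (R := ℂ) (repr.right i) := by
          simp [map_sum, map_smul, smul_eq_mul, mul_comm]
      _ = Coalgebra.counit (R := ℂ) x := h2
  have εstar : ∀ x : H, Coalgebra.counit (R := ℂ) (star x)
      = star (Coalgebra.counit (R := ℂ) x) := by
    intro x
    have h := hθ (θ x)
    rw [hθθ] at h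
    have hx : star x = HopfAlgebra.antipode (R := ℂ) (θ x) := by
      conv_lhs => rw [h]
      exact star_star _
    rw [hx, εS, hθε]
  -- J is a left ideal
  have hmulJ : ∀ (c : H) {x : H}, x ∈ J → c * x ∈ J := by
    intro c x hx
    rw [hJ] at hx ⊢
    induction hx using Submodule.span_induction with
    | mem y hy =>
        obtain ⟨a, b', hb', rfl⟩ := hy
        exact Submodule.subset_span ⟨c * a, b', hb', (mul_assoc c a b').symm⟩
    | zero => simp only [mul_zero]; exact Submodule.zero_mem _
    | add u v _ _ hu hv => rw [mul_add]; exact add_mem hu hv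
    | smul r u _ hu => rw [mul_smul_comm]; exact Submodule.smul_mem _ _ hu
  -- key: θ maps B⁺ into J
  have key : ∀ b ∈ B, Coalgebra.counit (R := ℂ) b = 0 → θ b ∈ J := by
    intro b hb hεb
    obtain ⟨t, ht⟩ := hB b hb
    obtain ⟨s, hs⟩ := TensorProduct.exists_finset t
    have hcomul : ∑ p ∈ s, ((p.1 : H) ⊗ₜ[ℂ] p.2) = Coalgebra.comul (R := ℂ) b := by
      rw [← ht, hs, map_sum]
      simp [TensorProduct.map_tmul]
    let repr : Coalgebra.Repr ℂ b _ := ⟨s, fun p => (p.1 : H), fun p => p.2, hcomul⟩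
    have fact1 : ∑ p ∈ s, (p.1 : H) * HopfAlgebra.antipode (R := ℂ) p.2 = 0 := by
      have h := sum_mul_antipode_eq_algebraMap_counit (R := ℂ) repr
      simp only [repr] at h
      simpa [hεb] using h
    have fact2 : ∑ p ∈ s, Coalgebra.counit (R := ℂ) (p.1 : H) • p.2 = b := by
      have h := sum_counit_tmul_eq (R := ℂ) repr
      have h2 := congrArg (TensorProduct.lid ℂ H) h
      simpa [repr, map_sum] using h2
    have fact1' : ∑ p ∈ s, θ p.2 * star (p.1 : H) = 0 := by
      have h := congrArg (star : H → H) fact1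
      simp only [star_sum, star_mul, star_zero] at h
      simpa [← hθ] using h
    have hθb : θ b = ∑ p ∈ s, θ p.2 * star (algebraMap ℂ H
        (Coalgebra.counit (R := ℂ) (p.1 : H))) := by
      conv_lhs => rw [← fact2]
      have hsum : θ (∑ p ∈ s, Coalgebra.counit (R := ℂ) (p.1 : H) • p.2)
          = ∑ p ∈ s, θ (Coalgebra.counit (R := ℂ) (p.1 : H) • p.2) := by
        simp only [hθ, map_sum, star_sum]
      rw [hsum]
      exact Finset.sum_congr rfl fun p _ => hsmulR _ _
    have hfinal : θ b = - ∑ p ∈ s, θ p.2 *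
        (star (p.1 : H) - star (algebraMap ℂ H (Coalgebra.counit (R := ℂ) (p.1 : H)))) := by
      have expand : ∀ p ∈ s, θ p.2 * star (algebraMap ℂ H
            (Coalgebra.counit (R := ℂ) (p.1 : H)))
          = θ p.2 * star (p.1 : H) - θ p.2 *
            (star (p.1 : H) - star (algebraMap ℂ H (Coalgebra.counit (R := ℂ) (p.1 : H)))) := by
        intro p _
        rw [mul_sub, sub_sub_cancel]
      rw [hθb, Finset.sum_congr rfl expand, Finset.sum_sub_distrib, fact1', zero_sub]
    rw [hfinal]
    refine neg_mem (Submodule.sum_mem _ fun p _ => ?_)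
    have hcp : (star (p.1 : H) - star (algebraMap ℂ H
        (Coalgebra.counit (R := ℂ) (p.1 : H)))) ∈ Bplus := by
      rw [hBplus]
      constructor
      · exact B.sub_mem (hBstar _ p.1.2) (hBstar _ (B.algebraMap_mem _))
      · rw [map_sub, εstar, εstar, Bialgebra.counit_algebraMap, sub_self]
    rw [hJ]
    exact Submodule.subset_span ⟨θ p.2, _, hcp, rfl⟩
  -- θ maps J into J
  have hsub : ∀ x ∈ J, θ x ∈ J := by
    intro x hx
    rw [hJ] at hx
    induction hx using Submodule.span_induction with
    | mem y hy =>
        obtain ⟨a, b', hb', rfl⟩ := hy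
        rw [hBplus] at hb'
        rw [hθmul]
        exact hmulJ (θ a) (key b' hb'.1 hb'.2)
    | zero => rw [θzero]; exact J.zero_mem
    | add u v _ _ hu hv => rw [θadd]; exact add_mem hu hv
    | smul r u _ hu => rw [hsmulL]; exact hmulJ _ hu
  ext x
  constructor
  · rintro ⟨y, hy, rfl⟩
    exact hsub y hy
  · intro hx
    exact ⟨θ x, hsub x hx, hθθ x⟩
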